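/- Let G be a simple graph on a finite vertex type V, and let H be its incidence matrix over ZMod 2 (rows indexed by vertices, columns indexed by edges, with entry 1 exactly when the vertex lies in the edge). For a nonempty finite set C of edges of G, the family of columns of H indexed by C is minimally dependent (linearly dependent, but the columns indexed by any proper subset of C are linearly independent) if, and only if, there exists a cycle in G whose edge set is exactly C. -/

import Mathlib

set_option linter.unusedSectionVars false
set_option maxHeartbeats 1000000

open SimpleGraph SimpleGraph.Walk Finset

section helpers

variable {V : Type*} [DecidableEq V] {G : SimpleGraph V}


lemma aux_H1 {v w x : V} (p : G.Walk v w) (hp : p.IsPath) (hx : s(v,x) ∈ p.edges) :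
    ∃ (h : G.Adj v x) (q : G.Walk x w), p = Walk.cons h q := by
  cases p with
  | nil => simp at hx
  | cons h q =>
    rw [edges_cons, List.mem_cons] at hx
    rcases hx with heq | hmem
    · obtain rfl : x = _ := Sym2.congr_right.mp heq
      exact ⟨h, q, rfl⟩
    · exact absurd (q.fst_mem_support_of_mem_edges hmem) ((cons_isPath_iff _ _).mp hp).2

lemma aux_H1end {x a : V} (p : G.Walk x a) (hp : p.IsPath) {e : Sym2 V}
    (he : e ∈ p.edges) (ha : a ∈ e) :
    ∃ (z : V) (h : G.Adj z a) (q : G.Walk x z), p = q.concat h ∧ e = s(z,a) := by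
  obtain ⟨c, rfl⟩ := Sym2.mem_iff_exists.mp ha
  have he' : s(a,c) ∈ p.reverse.edges := by
    rwa [edges_reverse, List.mem_reverse]
  obtain ⟨h, q, hq⟩ := aux_H1 p.reverse hp.reverse he'
  refine ⟨c, h.symm, q.reverse, ?_, Sym2.eq_swap⟩
  have := congrArg Walk.reverse hq
  rwa [reverse_reverse, reverse_cons] at this

lemma aux_H2 {a b : V} (P : G.Walk a b) (hp : P.IsPath) (T : Finset (Sym2 V))
    (hTne : T.Nonempty) (hsub : ∀ e ∈ T, e ∈ P.edges) :
    ∃ v, ¬ Even ((T.filter (fun e => v ∈ e)).card) := by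
  induction P with
  | nil =>
    obtain ⟨e, he⟩ := hTne
    exact absurd (hsub e he) (by simp)
  | @cons a c b h q ih =>
    rw [cons_isPath_iff] at hp
    by_cases hmem : s(a,c) ∈ T
    · refine ⟨a, ?_⟩
      have hfe : T.filter (fun e => a ∈ e) = {s(a,c)} := by
        ext e
        simp only [mem_filter, mem_singleton]
        constructor
        · rintro ⟨heT, hae⟩
          have hm := hsub e heT
          rw [edges_cons, List.mem_cons] at hm
          rcases hm with heq | hmem'
          · exact heq
          · obtain ⟨z, rfl⟩ := Sym2.mem_iff_exists.mp hae
            exact absurd (q.fst_mem_support_of_mem_edges hmem') hp.2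
        · rintro rfl
          exact ⟨hmem, Sym2.mem_mk_left _ _⟩
      rw [hfe]
      simp
    · refine ih hp.1 (fun e heT => ?_)
      have hm := hsub e heT
      rw [edges_cons, List.mem_cons] at hm
      rcases hm with heq | hmem'
      · exact absurd (heq ▸ heT) hmem
      · exact hmem'

lemma aux_H4 {u : V} (w : G.Walk u u) (hw : w.IsCycle) (T : Finset (Sym2 V))
    (hTne : T.Nonempty) (hT : ∀ e ∈ T, e ∈ w.edges) {e₀ : Sym2 V}
    (he₀ : e₀ ∈ w.edges) (he₀T : e₀ ∉ T) :
    ∃ v, ¬ Even ((T.filter (fun e => v ∈ e)).card) := by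
  induction e₀ using Sym2.ind with
  | _ a b =>
  have ha : a ∈ w.support := w.fst_mem_support_of_mem_edges he₀
  have hrot : ∀ e, e ∈ (w.rotate a ha).edges ↔ e ∈ w.edges :=
    fun e => (rotate_edges w a ha).mem_iff
  have hcyc : (w.rotate a ha).IsCycle := hw.rotate ha
  obtain ⟨x, hax, p, hw'⟩ := not_nil_iff.mp hcyc.not_nil
  rw [hw'] at hcyc hrot
  rw [cons_isCycle_iff] at hcyc
  obtain ⟨hppath, hfst⟩ := hcyc
  have he₀' : s(a,b) ∈ (Walk.cons hax p).edges := (hrot _).mpr he₀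
  rw [edges_cons, List.mem_cons] at he₀'
  rcases he₀' with heq | hmem
  · -- e₀ is the first edge of the rotated cycle
    refine aux_H2 p hppath T hTne (fun e heT => ?_)
    have hm := (hrot e).mpr (hT e heT)
    rw [edges_cons, List.mem_cons] at hm
    rcases hm with h1 | h2
    · exact absurd (h1.trans heq.symm ▸ heT) he₀T
    · exact h2
  · -- e₀ is the last edge of the rotated cycle
    obtain ⟨z, hza, q, hpq, he0eq⟩ :=
      aux_H1end p hppath hmem (Sym2.mem_mk_left a b)
    have hqpath : q.IsPath := by
      rw [hpq, concat_eq_append] at hppath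
      exact hppath.of_append_left
    have hanotq : a ∉ q.support := by
      have := hppath.support_nodup
      rw [hpq, support_concat, List.nodup_append] at this
      intro hmem'
      exact this.2.2 a hmem' a (List.mem_singleton_self a) rfl
    refine aux_H2 (Walk.cons hax q) ((cons_isPath_iff _ _).mpr ⟨hqpath, hanotq⟩)
      T hTne (fun e heT => ?_)
    have hm := (hrot e).mpr (hT e heT)
    rw [hpq, edges_cons, edges_concat, List.concat_eq_append, List.mem_cons,
      List.mem_append, List.mem_singleton] at hm
    rw [edges_cons, List.mem_cons]
    rcases hm with h1 | h2 | h3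
    · exact Or.inl h1
    · exact Or.inr h2
    · exfalso
      rw [← he0eq] at h3
      exact he₀T (h3 ▸ heT)

lemma aux_H5 [Fintype V] (G : SimpleGraph V) [DecidableRel G.Adj]
    (hedge : ∃ a b, G.Adj a b) (heven : ∀ v, Even (G.degree v)) :
    ∃ (u : V) (w : G.Walk u u), w.IsCycle := by
  classical
  set P : Set ℕ := {n | ∃ (u v : V) (p : G.Walk u v), p.IsPath ∧ p.length = n} with hP
  have hPne : P.Nonempty := ⟨0, hedge.choose, hedge.choose, Walk.nil, IsPath.nil, rfl⟩
  have hPbdd : BddAbove P := by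
    refine ⟨Fintype.card V, fun n hn => ?_⟩
    obtain ⟨u, v, p, hp, rfl⟩ := hn
    exact (hp.length_lt).le
  have hmem : sSup P ∈ P := Nat.sSup_mem hPne hPbdd
  obtain ⟨u, v, p, hp, hlen⟩ := hmem
  have h1P : 1 ∈ P := by
    obtain ⟨a, b, hab⟩ := hedge
    exact ⟨a, b, Walk.cons hab Walk.nil, by simp [hab.ne], rfl⟩
  have h1n : 1 ≤ sSup P := le_csSup hPbdd h1P
  have hprnil : ¬ p.reverse.Nil := by
    rw [not_nil_iff_lt_length, length_reverse, hlen]; omega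
  obtain ⟨y, hvy, q, hpr⟩ := not_nil_iff.mp hprnil
  -- v has a neighbor y; degree of v is even and positive, so ≥ 2
  have hymem : y ∈ G.neighborFinset v := by rw [mem_neighborFinset]; exact hvy
  have hdeg2 : 1 < G.degree v := by
    have h1 : 1 ≤ G.degree v := by
      rw [← G.card_neighborFinset_eq_degree]
      exact card_pos.mpr ⟨y, hymem⟩
    rcases heven v with ⟨k, hk⟩
    omega
  obtain ⟨x, hxmem, hxy⟩ := Finset.exists_mem_ne
    (by rwa [G.card_neighborFinset_eq_degree]) y
  rw [mem_neighborFinset] at hxmem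
  by_cases hxs : x ∈ p.reverse.support
  · -- close up a cycle
    have ht : (p.reverse.takeUntil x hxs).IsPath := hp.reverse.takeUntil hxs
    refine ⟨x, Walk.cons hxmem.symm (p.reverse.takeUntil x hxs), ?_⟩
    rw [cons_isCycle_iff]
    refine ⟨ht, fun hbad => ?_⟩
    rw [Sym2.eq_swap] at hbad
    have hbad' : s(v, x) ∈ p.reverse.edges :=
      edges_takeUntil_subset _ _ hbad
    obtain ⟨h', q', hq'⟩ := aux_H1 p.reverse hp.reverse hbad'
    rw [hpr] at hq'
    have : y = x := by
      have hs := congrArg Walk.support hq'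
      rw [support_cons, support_cons, q.support_eq_cons, q'.support_eq_cons] at hs
      exact (List.cons.injEq _ _ _ _).mp ((List.cons.injEq _ _ _ _).mp hs).2 |>.1
    exact hxy this.symm
  · -- extend the path: contradiction with maximality
    exfalso
    have hnew : (Walk.cons hxmem.symm p.reverse).IsPath :=
      (cons_isPath_iff _ _).mpr ⟨hp.reverse, hxs⟩
    have : p.reverse.length + 1 ∈ P := ⟨x, u, _, hnew, by simp⟩
    have hle := le_csSup hPbdd this
    rw [length_reverse, hlen] at hle
    omega

lemma aux_H7 [Fintype V] (E : Finset (Sym2 V)) (hE : ∀ e ∈ E, ¬ e.IsDiag)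
    [DecidableRel (SimpleGraph.fromEdgeSet (E : Set (Sym2 V))).Adj] (v : V) :
    (SimpleGraph.fromEdgeSet (E : Set (Sym2 V))).degree v
      = (E.filter (fun e => v ∈ e)).card := by
  rw [← card_neighborFinset_eq_degree]
  refine Finset.card_bij (fun w _ => s(v, w)) ?_ ?_ ?_
  · intro w hw
    rw [mem_neighborFinset, fromEdgeSet_adj] at hw
    rw [mem_filter]
    exact ⟨hw.1, Sym2.mem_mk_left _ _⟩
  · intro w₁ h₁ w₂ h₂ heq
    rw [mem_neighborFinset, fromEdgeSet_adj] at h₁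
    exact (Sym2.congr_right.mp heq)
  · intro e he
    rw [mem_filter] at he
    obtain ⟨z, rfl⟩ := Sym2.mem_iff_exists.mp he.2
    refine ⟨z, ?_, rfl⟩
    rw [mem_neighborFinset, fromEdgeSet_adj]
    refine ⟨he.1, ?_⟩
    intro h
    exact hE _ he.1 (by rw [Sym2.isDiag_iff_proj_eq]; exact h)

lemma aux_H9 {u : V} (w : G.Walk u u) (hw : w.IsTrail) (D : Finset G.edgeSet)
    (hD : ∀ e : G.edgeSet, e ∈ D ↔ (e : Sym2 V) ∈ w.edges) (v : V) :
    Even ((D.filter (fun e : G.edgeSet => v ∈ (e : Sym2 V))).card) := by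
  have hcount := hw.even_countP_edges_iff v
  have htriv : Even (w.edges.countP fun e => v ∈ e) := hcount.mpr (fun h => absurd rfl h)
  have hnodup : (w.edges.filter (fun e => v ∈ e)).Nodup := hw.edges_nodup.filter _
  have hcard : (D.filter (fun e : G.edgeSet => v ∈ (e : Sym2 V))).card
      = (w.edges.countP fun e => v ∈ e) := by
    rw [List.countP_eq_length_filter, ← List.toFinset_card_of_nodup hnodup]
    refine Finset.card_bij (fun e _ => (e : Sym2 V)) ?_ ?_ ?_
    · intro e he
      rw [mem_filter] at he
      rw [List.mem_toFinset, List.mem_filter]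
      exact ⟨(hD e).mp he.1, by simpa using he.2⟩
    · intro e₁ _ e₂ _ heq
      exact Subtype.ext heq
    · intro e he
      rw [List.mem_toFinset, List.mem_filter] at he
      have heG : e ∈ G.edgeSet := w.edges_subset_edgeSet he.1
      refine ⟨⟨e, heG⟩, ?_, rfl⟩
      rw [mem_filter]
      exact ⟨(hD ⟨e, heG⟩).mpr he.1, by simpa using he.2⟩
  rwa [hcard]

lemma aux_img (D : Finset G.edgeSet) (v : V) :
    ((D.image (fun e : G.edgeSet => (e : Sym2 V))).filter (fun e => v ∈ e)).card
      = (D.filter (fun e : G.edgeSet => v ∈ (e : Sym2 V))).card := by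
  symm
  refine Finset.card_bij (fun e _ => (e : Sym2 V)) ?_ ?_ ?_
  · intro e he
    rw [mem_filter] at he ⊢
    exact ⟨mem_image_of_mem _ he.1, he.2⟩
  · intro e₁ _ e₂ _ heq
    exact Subtype.ext heq
  · intro e he
    rw [mem_filter, mem_image] at he
    obtain ⟨⟨d, hd, rfl⟩, hv⟩ := he
    exact ⟨d, mem_filter.mpr ⟨hd, hv⟩, rfl⟩


section linalg

variable [Fintype V]


lemma zmod2_even_iff (n : ℕ) : (n : ZMod 2) = 0 ↔ Even n := by
  rw [ZMod.natCast_eq_zero_iff, even_iff_two_dvd]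

lemma aux_H8a (S : Set G.edgeSet) [Fintype ↥S] (D : Finset G.edgeSet)
    (hD : ↑D ⊆ S) (v : V) :
    ∑ e : ↥S, (if (e : G.edgeSet) ∈ D then (1 : ZMod 2) else 0)
        * (if v ∈ ((e : G.edgeSet) : Sym2 V) then 1 else 0)
      = ((D.filter (fun e : G.edgeSet => v ∈ (e : Sym2 V))).card : ZMod 2) := by
  have h1 : ∀ e : ↥S, (if (e : G.edgeSet) ∈ D then (1 : ZMod 2) else 0)
      * (if v ∈ ((e : G.edgeSet) : Sym2 V) then 1 else 0)
      = if ((e : G.edgeSet) ∈ D ∧ v ∈ ((e : G.edgeSet) : Sym2 V)) then 1 else 0 := by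
    intro e
    split_ifs with h1 h2 h3 <;> simp_all
  rw [Finset.sum_congr rfl (fun e _ => h1 e), Finset.sum_boole]
  congr 1
  refine Finset.card_bij (fun e _ => (e : G.edgeSet)) ?_ ?_ ?_
  · intro e he
    simp only [mem_filter, mem_univ, true_and] at he ⊢
    exact ⟨he.1, he.2⟩
  · intro e₁ _ e₂ _ heq
    exact Subtype.ext heq
  · intro d hd
    rw [mem_filter] at hd
    exact ⟨⟨d, hD hd.1⟩, by simp [hd.1, hd.2], rfl⟩

lemma aux_H8 (H : Matrix V G.edgeSet (ZMod 2))
    (hH : ∀ (v : V) (e : G.edgeSet), H v e = if v ∈ (e : Sym2 V) then 1 else 0)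
    (S : Set G.edgeSet) [Fintype ↥S] :
    LinearIndependent (ZMod 2) (fun e : S => fun v => H v e.1) ↔
      ∀ D : Finset G.edgeSet, ↑D ⊆ S →
        (∀ v : V, Even ((D.filter (fun e : G.edgeSet => v ∈ (e : Sym2 V))).card)) → D = ∅ := by
  classical
  rw [Fintype.linearIndependent_iff]
  have hone : ∀ x : ZMod 2, x ≠ 0 → x = 1 := by decide
  constructor
  · intro hli D hDS hev
    set g : ↥S → ZMod 2 := fun e => if (e : G.edgeSet) ∈ D then 1 else 0 with hg
    have hsum : ∑ e : ↥S, g e • (fun v => H v (e : G.edgeSet)) = 0 := by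
      funext v
      rw [Finset.sum_apply]
      simp only [Pi.smul_apply, smul_eq_mul, Pi.zero_apply, hg, hH]
      rw [aux_H8a S D hDS v, zmod2_even_iff]
      exact hev v
    have hz := hli g hsum
    rw [Finset.eq_empty_iff_forall_notMem]
    intro d hd
    have := hz ⟨d, hDS hd⟩
    simp [hg, hd] at this
  · intro hD g hsum i
    set D : Finset G.edgeSet :=
      (univ.filter (fun e : ↥S => g e ≠ 0)).image (fun e : ↥S => (e : G.edgeSet)) with hDdef
    have hDS : ↑D ⊆ S := by
      intro d hd
      simp only [hDdef, coe_image, Set.mem_image, mem_coe, mem_filter] at hd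
      obtain ⟨e, _, rfl⟩ := hd
      exact e.2
    have hgind : ∀ e : ↥S, g e = if (e : G.edgeSet) ∈ D then 1 else 0 := by
      intro e
      by_cases h : g e = 0
      · rw [h, eq_comm, if_neg]
        intro hmem
        simp only [hDdef, mem_image, mem_filter, mem_univ, true_and] at hmem
        obtain ⟨e', hg', he'⟩ := hmem
        exact hg' (Subtype.ext he' ▸ h)
      · rw [hone _ h, eq_comm, if_pos]
        simp only [hDdef, mem_image, mem_filter, mem_univ, true_and]
        exact ⟨e, h, rfl⟩
    have hev : ∀ v : V, Even ((D.filter (fun e : G.edgeSet => v ∈ (e : Sym2 V))).card) := by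
      intro v
      rw [← zmod2_even_iff, ← aux_H8a S D hDS v]
      have h0 := congrFun hsum v
      rw [Finset.sum_apply] at h0
      simp only [Pi.smul_apply, smul_eq_mul, Pi.zero_apply, hH] at h0
      calc ∑ e : ↥S, (if (e : G.edgeSet) ∈ D then (1 : ZMod 2) else 0)
              * (if v ∈ ((e : G.edgeSet) : Sym2 V) then 1 else 0)
          = ∑ e : ↥S, g e * (if v ∈ ((e : G.edgeSet) : Sym2 V) then 1 else 0) :=
            Finset.sum_congr rfl (fun e _ => by rw [hgind e])
        _ = 0 := h0
    have hDe := hD D hDS hev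
    by_contra hgi
    have hmem : (i : G.edgeSet) ∈ D := by
      simp only [hDdef, mem_image, mem_filter, mem_univ, true_and]
      exact ⟨i, hgi, rfl⟩
    rw [hDe] at hmem
    simp at hmem

end linalg

end helpers


/-- `C` is the edge set of a circuit of a graph `G` if, and only if, `C` is a circuit
of the graphic matroid `M(G)`: for a simple graph `G` with incidence matrix `H` over
`ZMod 2`, a nonempty finite set `C` of edges indexes a minimally dependent family of
columns of `H` iff `C` is the edge set of a cycle of `G`. -/
theorem edge_set_minimally_dependent_iff_cycle
    {V : Type*} [Fintype V] [DecidableEq V] (G : SimpleGraph V)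
    (H : Matrix V G.edgeSet (ZMod 2))
    (hH : ∀ (v : V) (e : G.edgeSet), H v e = if v ∈ (e : Sym2 V) then 1 else 0)
    (C : Set G.edgeSet) (hfin : C.Finite) (hne : C.Nonempty) :
    ((¬ LinearIndependent (ZMod 2) fun e : C => fun v => H v e.1) ∧
      ∀ S : Set G.edgeSet, S ⊂ C →
        LinearIndependent (ZMod 2) fun e : S => fun v => H v e.1)
    ↔ ∃ (u : V) (w : G.Walk u u), w.IsCycle ∧
        {s : Sym2 V | s ∈ w.edges} = Subtype.val '' C := by
  classical
  haveI : Fintype ↥C := hfin.fintype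
  constructor
  · rintro ⟨hdep, hmin⟩
    rw [aux_H8 H hH C] at hdep
    push_neg at hdep
    obtain ⟨D, hDC, hDev, hDne⟩ := hdep
    set E : Finset (Sym2 V) := D.image (fun e : G.edgeSet => (e : Sym2 V)) with hE
    have hEG : ∀ e ∈ E, e ∈ G.edgeSet := by
      intro e he
      rw [hE, mem_image] at he
      obtain ⟨d, _, rfl⟩ := he
      exact d.2
    have hEdiag : ∀ e ∈ E, ¬ e.IsDiag := fun e he => G.not_isDiag_of_mem_edgeSet (hEG e he)
    haveI : DecidableRel (SimpleGraph.fromEdgeSet (E : Set (Sym2 V))).Adj :=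
      Classical.decRel _
    have hedge : ∃ a b, (SimpleGraph.fromEdgeSet (E : Set (Sym2 V))).Adj a b := by
      obtain ⟨d, hd⟩ := hDne
      obtain ⟨b, hab⟩ := Sym2.mem_iff_exists.mp (Sym2.out_fst_mem (d : Sym2 V))
      refine ⟨(Quot.out (d : Sym2 V)).1, b, ?_⟩
      rw [fromEdgeSet_adj]
      have hdE : (d : Sym2 V) ∈ E := mem_image_of_mem _ hd
      refine ⟨by rwa [← hab], fun h => ?_⟩
      exact hEdiag _ hdE (by rw [hab, Sym2.isDiag_iff_proj_eq]; exact h)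
    have heven : ∀ v, Even ((SimpleGraph.fromEdgeSet (E : Set (Sym2 V))).degree v) := by
      intro v
      rw [aux_H7 E hEdiag v, aux_img D v]
      exact hDev v
    obtain ⟨u, c, hc⟩ := aux_H5 (SimpleGraph.fromEdgeSet (E : Set (Sym2 V))) hedge heven
    have hsub : ∀ e ∈ c.edges, e ∈ G.edgeSet := by
      intro e he
      have h2 := c.edges_subset_edgeSet he
      rw [edgeSet_fromEdgeSet] at h2
      exact hEG e h2.1
    set c' : G.Walk u u := c.transfer G hsub with hc'def
    have hc' : c'.IsCycle := hc.transfer hsub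
    have hce : c'.edges = c.edges := edges_transfer c hsub
    set D' : Finset G.edgeSet := D.filter (fun e : G.edgeSet => (e : Sym2 V) ∈ c'.edges)
      with hD'
    have hD'iff : ∀ e : G.edgeSet, e ∈ D' ↔ (e : Sym2 V) ∈ c'.edges := by
      intro e
      rw [hD', mem_filter]
      refine ⟨fun h => h.2, fun h => ⟨?_, h⟩⟩
      have heE : (e : Sym2 V) ∈ E := by
        have := c.edges_subset_edgeSet (hce ▸ h)
        rw [edgeSet_fromEdgeSet] at this
        exact this.1
      rw [hE, mem_image] at heE
      obtain ⟨d, hd, hde⟩ := heE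
      exact (Subtype.ext hde : d = e) ▸ hd
    have hevenD' : ∀ v, Even ((D'.filter (fun e : G.edgeSet => v ∈ (e : Sym2 V))).card) :=
      aux_H9 c' hc'.isCircuit.isTrail D' hD'iff
    have hD'sub : ↑D' ⊆ C := by
      refine Set.Subset.trans ?_ hDC
      exact_mod_cast Finset.coe_subset.mpr (Finset.filter_subset _ _)
    have hD'ne : D' ≠ ∅ := by
      have hlen : c'.edges ≠ [] := by
        have := hc'.three_le_length
        intro h
        rw [← length_edges, h] at this
        simp at this
      obtain ⟨e₀, he₀⟩ := List.exists_mem_of_ne_nil _ hlen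
      have heG : e₀ ∈ G.edgeSet := c'.edges_subset_edgeSet he₀
      intro h
      have : (⟨e₀, heG⟩ : G.edgeSet) ∈ D' := (hD'iff _).mpr he₀
      rw [h] at this
      simp at this
    have hCD' : ↑D' = C := by
      by_contra hne'
      have hss : ↑D' ⊂ C := Set.ssubset_iff_subset_ne.mpr ⟨hD'sub, hne'⟩
      have hli := hmin (↑D' : Set G.edgeSet) hss
      haveI : Fintype ↥(↑D' : Set G.edgeSet) := FinsetCoe.fintype D'
      rw [aux_H8 H hH (↑D' : Set G.edgeSet)] at hli
      exact hD'ne (hli D' (by rfl) hevenD')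
    refine ⟨u, c', hc', ?_⟩
    rw [← hCD']
    ext e
    simp only [Set.mem_setOf_eq, Set.mem_image, Finset.mem_coe]
    constructor
    · intro he
      have heG : e ∈ G.edgeSet := c'.edges_subset_edgeSet he
      exact ⟨⟨e, heG⟩, (hD'iff _).mpr he, rfl⟩
    · rintro ⟨d, hd, rfl⟩
      exact (hD'iff d).mp hd
  · rintro ⟨u, w, hw, hedges⟩
    have hmemiff : ∀ e : G.edgeSet, (e : Sym2 V) ∈ w.edges ↔ e ∈ C := by
      intro e
      constructor
      · intro h
        have : (e : Sym2 V) ∈ Subtype.val '' C := hedges ▸ h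
        obtain ⟨d, hd, hde⟩ := this
        exact (Subtype.ext hde : d = e) ▸ hd
      · intro h
        have : (e : Sym2 V) ∈ Subtype.val '' C := ⟨e, h, rfl⟩
        rw [← hedges] at this
        exact this
    constructor
    · rw [aux_H8 H hH C]
      intro hall
      have heven : ∀ v, Even ((hfin.toFinset.filter
          (fun e : G.edgeSet => v ∈ (e : Sym2 V))).card) := by
        refine aux_H9 w hw.isCircuit.isTrail hfin.toFinset (fun e => ?_)
        rw [Set.Finite.mem_toFinset, hmemiff]
      have := hall hfin.toFinset (by rw [Set.Finite.coe_toFinset]) heven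
      exact hne.ne_empty (Set.Finite.toFinset_eq_empty.mp this)
    · intro S hS
      haveI : Fintype ↥S := (hfin.subset hS.le).fintype
      rw [aux_H8 H hH S]
      intro D hDS hev
      by_contra hDne
      obtain ⟨d, hd⟩ := Finset.nonempty_iff_ne_empty.mpr hDne
      set T : Finset (Sym2 V) := D.image (fun e : G.edgeSet => (e : Sym2 V)) with hT
      have hTne : T.Nonempty := ⟨↑d, mem_image_of_mem _ hd⟩
      have hTsub : ∀ e ∈ T, e ∈ w.edges := by
        intro e he
        rw [hT, mem_image] at he
        obtain ⟨d', hd', rfl⟩ := he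
        exact (hmemiff d').mpr (hS.le (hDS hd'))
      obtain ⟨c₀, hc₀C, hc₀S⟩ := Set.exists_of_ssubset hS
      have he₀ : (c₀ : Sym2 V) ∈ w.edges := (hmemiff c₀).mpr hc₀C
      have he₀T : (c₀ : Sym2 V) ∉ T := by
        intro h
        rw [hT, mem_image] at h
        obtain ⟨d', hd', hde⟩ := h
        exact hc₀S ((Subtype.ext hde : d' = c₀) ▸ hDS hd')
      obtain ⟨v, hodd⟩ := aux_H4 w hw T hTne hTsub he₀ he₀T
      exact hodd (by rw [hT, aux_img D v]; exact hev v)
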